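/- For R₁ ≥ R₂ > 0 define Ψ_{R₁,R₂}(x) := |B_{R₁}(0) ∩ B_{R₂}(x)| (the Lebesgue measure of the intersection of the two balls), a radial function of x which is absolutely continuous in r = |x| with −(d/dr)Ψ_{R₁,R₂}(r) = |∂B_{R₁}(0) ∩ B_{R₂}(r)| (the (d−1)-dimensional surface measure) for r ∈ (R₁−R₂, R₁+R₂). Then for every ε₀ ∈ (0, 1), there is a constant c(d, ε₀) > 0 such that −(d/dr)Ψ_{R₁,R₂}(r) ≥ c(d, ε₀) R₂^{d−1} whenever |r − R₁| ≤ (1−ε₀) R₂. -/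

import Mathlib

open MeasureTheory Metric Set Filter ENNReal Topology
noncomputable section

abbrev Euc (d : ℕ) := EuclideanSpace ℝ (Fin d)

def Psi (d : ℕ) (R₁ R₂ : ℝ) (e : Euc d) (t : ℝ) : ℝ :=
  ((volume : Measure (Euc d)) (ball (0 : Euc d) R₁ ∩ ball (t • e) R₂)).toReal

lemma eps_num {ε : ℝ} (h1 : 0 < ε) (h2 : ε < 1) :
    (1 - ε + ε/4 + ε^2/16)^2 + (ε/4)^2 < 1 := by
  nlinarith [sq_nonneg ε, mul_pos h1 h1, sq_nonneg (1-ε), mul_pos (mul_pos h1 h1) h1]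

lemma mem_ball_coord {d : ℕ} (i0 : Fin d) (s R : ℝ) (hR : 0 < R) (x : Euc d) :
    x ∈ ball (s • (EuclideanSpace.single i0 (1:ℝ))) R ↔
      (x i0 - s)^2 + ∑ i ∈ Finset.univ.erase i0, (x i)^2 < R^2 := by
  rw [mem_ball, EuclideanSpace.dist_eq, Real.sqrt_lt' hR]
  have hc : ∀ i, dist (x i) ((s • EuclideanSpace.single i0 (1:ℝ)) i) ^ 2
      = (x i - if i = i0 then s else 0)^2 := by
    intro i
    by_cases hi : i = i0 <;>
      simp [hi, Real.dist_eq, sq_abs, EuclideanSpace.single_apply, PiLp.smul_apply,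
        smul_eq_mul]
  rw [Finset.sum_congr rfl (fun i _ => hc i),
    ← Finset.add_sum_erase _ _ (Finset.mem_univ i0), if_pos rfl,
    Finset.sum_congr rfl
      (fun i hi => by rw [if_neg (Finset.mem_erase.1 hi).1, sub_zero])]

lemma mem_ball_zero_coord {d : ℕ} (i0 : Fin d) (R : ℝ) (hR : 0 < R) (x : Euc d) :
    x ∈ ball (0 : Euc d) R ↔
      (x i0)^2 + ∑ i ∈ Finset.univ.erase i0, (x i)^2 < R^2 := by
  have := mem_ball_coord i0 0 R hR x
  rw [zero_smul, sub_zero] at this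
  exact this

/-- cylinder-type sets -/
def cyl {d : ℕ} (i0 : Fin d) (s0 : Set ℝ) (β : ℝ) : Set (Euc d) :=
  (MeasurableEquiv.toLp 2 (Fin d → ℝ)).symm ⁻¹'
    (univ.pi fun i => if i = i0 then s0 else Ioo (-β) β)

lemma mem_cyl {d : ℕ} (i0 : Fin d) (s0 : Set ℝ) (β : ℝ) (x : Euc d) :
    x ∈ cyl i0 s0 β ↔ x i0 ∈ s0 ∧ ∀ i, i ≠ i0 → x i ∈ Ioo (-β) β := by
  have hmEq_apply : ∀ (y : Euc d) (i : Fin d),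
      (MeasurableEquiv.toLp 2 (Fin d → ℝ)).symm y i = y i := by
    intro y i
    rfl
  simp only [cyl, mem_preimage, Set.mem_pi, mem_univ, forall_true_left]
  constructor
  · intro hx
    refine ⟨by have := hx i0; rwa [if_pos rfl, hmEq_apply] at this, fun i hi => ?_⟩
    have := hx i; rwa [if_neg hi, hmEq_apply] at this
  · rintro ⟨h1, h2⟩ i
    by_cases hi : i = i0
    · subst hi; rw [if_pos rfl, hmEq_apply]; exact h1
    · rw [if_neg hi, hmEq_apply]; exact h2 i hi

lemma measurable_cyl {d : ℕ} (i0 : Fin d) {s0 : Set ℝ} (hs0 : MeasurableSet s0) (β : ℝ) :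
    MeasurableSet (cyl i0 s0 β) :=
  (MeasurableEquiv.toLp 2 (Fin d → ℝ)).symm.measurable
    (MeasurableSet.univ_pi (fun i => by
      by_cases hi : i = i0 <;> simp [hi, hs0, measurableSet_Ioo]))

lemma volume_cyl {d : ℕ} (i0 : Fin d) {s0 : Set ℝ} (hs0 : MeasurableSet s0) (β : ℝ) :
    volume (cyl i0 s0 β) = volume s0 * (ENNReal.ofReal (2*β))^(d-1) := by
  rw [cyl, (EuclideanSpace.volume_preserving_symm_measurableEquiv_toLp (Fin d)).measure_preimage
    ((MeasurableSet.univ_pi (fun i => by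
      by_cases hi : i = i0 <;> simp [hi, hs0, measurableSet_Ioo])).nullMeasurableSet),
    volume_pi_pi]
  have hval : ∀ i : Fin d, volume (if i = i0 then s0 else Ioo (-β) β)
      = if i = i0 then volume s0 else ENNReal.ofReal (2*β) := by
    intro i
    by_cases hi : i = i0
    · simp [hi]
    · simp only [if_neg hi, Real.volume_Ioo]
      congr 1
      ring
  rw [Finset.prod_congr rfl (fun i _ => hval i),
    ← Finset.mul_prod_erase Finset.univ _ (Finset.mem_univ i0), if_pos rfl,
    Finset.prod_congr rfl (fun i hi => if_neg (Finset.mem_erase.1 hi).1),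
    Finset.prod_const, Finset.card_erase_of_mem (Finset.mem_univ i0),
    Finset.card_univ, Fintype.card_fin]

lemma T_apply {d : ℕ} (i0 : Fin d) (h : ℝ) (x : Euc d) (i : Fin d) :
    (x + h • EuclideanSpace.single i0 (1:ℝ)) i = x i + h * (if i = i0 then 1 else 0) := by
  simp only [PiLp.add_apply, PiLp.smul_apply, smul_eq_mul, EuclideanSpace.single_apply]

lemma T_preimage_ball {d : ℕ} (i0 : Fin d) (s R h : ℝ) :
    (fun x : Euc d => x + h • EuclideanSpace.single i0 (1:ℝ)) ⁻¹'
      ball (s • EuclideanSpace.single i0 (1:ℝ)) R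
      = ball ((s - h) • EuclideanSpace.single i0 (1:ℝ)) R := by
  ext x
  simp only [mem_preimage, mem_ball, dist_eq_norm]
  rw [sub_smul]
  have : x + h • EuclideanSpace.single i0 (1:ℝ) - s • EuclideanSpace.single i0 (1:ℝ)
      = x - (s • EuclideanSpace.single i0 (1:ℝ) - h • EuclideanSpace.single i0 (1:ℝ)) := by
    abel
  rw [this]

lemma T_preimage_cyl {d : ℕ} (i0 : Fin d) (s0 : Set ℝ) (β h : ℝ) :
    (fun x : Euc d => x + h • EuclideanSpace.single i0 (1:ℝ)) ⁻¹' cyl i0 s0 β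
      = cyl i0 ((fun u => u + h) ⁻¹' s0) β := by
  ext x
  simp only [mem_preimage]
  rw [mem_cyl, mem_cyl]
  constructor
  · rintro ⟨h1, h2⟩
    refine ⟨by rwa [T_apply, if_pos rfl, mul_one] at h1, fun i hi => ?_⟩
    have := h2 i hi; rwa [T_apply, if_neg hi, mul_zero, add_zero] at this
  · rintro ⟨h1, h2⟩
    refine ⟨by rw [T_apply, if_pos rfl, mul_one]; exact h1, fun i hi => ?_⟩
    rw [T_apply, if_neg hi, mul_zero, add_zero]; exact h2 i hi

lemma rho_nonneg {d : ℕ} (i0 : Fin d) (x : Euc d) :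
    0 ≤ ∑ i ∈ Finset.univ.erase i0, (x i)^2 :=
  Finset.sum_nonneg (fun i _ => sq_nonneg _)

lemma rho_bound {d : ℕ} (i0 : Fin d) {β : ℝ} (x : Euc d)
    (hx : ∀ i, i ≠ i0 → x i ∈ Ioo (-β) β) :
    ∑ i ∈ Finset.univ.erase i0, (x i)^2 ≤ ((d-1 : ℕ) : ℝ) * β^2 := by
  have h1 : ∑ i ∈ Finset.univ.erase i0, (x i)^2 ≤ (Finset.univ.erase i0).card • β^2 :=
    Finset.sum_le_card_nsmul _ _ _ (fun i hi => by
      have hxi := hx i (Finset.mem_erase.1 hi).1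
      nlinarith [hxi.1, hxi.2])
  rwa [Finset.card_erase_of_mem (Finset.mem_univ i0), Finset.card_univ, Fintype.card_fin,
    nsmul_eq_mul] at h1

/-- arithmetic for step 2 -/
lemma arith2 {t ρ R₁ R₂ r h : ℝ} (hρ : 0 ≤ ρ) (hr : 0 < r) (h0 : 0 < h)
    (hR : R₂ ≤ R₁) (hR₂ : 0 < R₂)
    (hm : (t+h)^2 + ρ < R₁^2) (hc : (t-r)^2 + ρ < R₂^2) : t^2 + ρ < R₁^2 := by
  by_contra hcon
  push_neg at hcon
  have hsq : R₂^2 ≤ R₁^2 := by nlinarith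
  have hA1 : 2*t*h + h^2 < 0 := by nlinarith
  have hA2 : r^2 < 2*r*t := by nlinarith
  have ht : 0 < t := by nlinarith [mul_pos hr hr]
  nlinarith [mul_pos ht h0]

set_option maxHeartbeats 1000000 in
/-- arithmetic for step 3 -/
lemma arith3 {ε₀ t ρ R₁ R₂ r h : ℝ} (hε0 : 0 < ε₀) (hε1 : ε₀ < 1)
    (hρ : 0 ≤ ρ) (hρβ : ρ ≤ (ε₀/4*R₂)^2)
    (hR₂ : 0 < R₂) (hR : R₂ ≤ R₁)
    (hr1 : -((1-ε₀)*R₂) ≤ r - R₁) (hr2 : r - R₁ ≤ (1-ε₀)*R₂)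
    (h0 : 0 < h) (hh : h ≤ ε₀/4*R₂)
    (hxA : t^2 + ρ < R₁^2) (hxm : R₁^2 ≤ (t+h)^2 + ρ) (ht0 : 0 < t) :
    (t - r)^2 + ρ < R₂^2 := by
  have hR₁ : 0 < R₁ := lt_of_lt_of_le hR₂ hR
  have e2 : ε₀/4*R₂ ≤ R₂/4 := by nlinarith
  have hq : (ε₀/4*R₂)^2 ≤ (R₂/4)^2 := pow_le_pow_left₀ (by positivity) e2 2
  have hsq : R₂^2 ≤ R₁^2 := by nlinarith
  have hρR : ρ ≤ R₁^2 := by nlinarith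
  set Tt := Real.sqrt (R₁^2 - ρ) with hTt
  have hT2 : Tt^2 = R₁^2 - ρ := Real.sq_sqrt (by linarith)
  have hT0 : 0 ≤ Tt := Real.sqrt_nonneg _
  have h1 : t < Tt := by
    by_contra hcon
    push_neg at hcon
    have := mul_self_le_mul_self hT0 hcon
    nlinarith
  have h2 : Tt ≤ t + h := by
    by_contra hcon
    push_neg at hcon
    have := mul_self_le_mul_self (by linarith : (0:ℝ) ≤ t + h) hcon.le
    nlinarith
  have h3 : Tt ≤ R₁ := by
    by_contra hcon
    push_neg at hcon
    have := mul_self_le_mul_self hR₁.le hcon.le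
    nlinarith
  have h4 : R₁ - Tt ≤ ε₀^2/16 * R₂ := by
    have k1 : Tt*Tt ≤ Tt*R₁ := mul_le_mul_of_nonneg_left h3 hT0
    have k2 : ε₀^2/16*R₂*R₂ ≤ ε₀^2/16*R₂*R₁ :=
      mul_le_mul_of_nonneg_left hR (by positivity)
    have k0 : R₁*(R₁ - Tt) ≤ ρ := by nlinarith [k1]
    have k3 : ρ ≤ ε₀^2/16*R₂*R₁ := by nlinarith [k2]
    have k4 : R₁*(R₁ - Tt) ≤ R₁*(ε₀^2/16*R₂) := by nlinarith [k0, k3]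
    exact (mul_le_mul_iff_right₀ hR₁).1 k4
  have h5 : t - r < (1 - ε₀) * R₂ := by linarith
  have h6 : r - t ≤ (1 - ε₀ + ε₀/4 + ε₀^2/16) * R₂ := by linarith
  have habs : (t - r)^2 ≤ ((1 - ε₀ + ε₀/4 + ε₀^2/16) * R₂)^2 := by
    apply sq_le_sq'
    · linarith
    · nlinarith [mul_pos hε0 hR₂, mul_pos (mul_pos hε0 hε0) hR₂]
  rw [mul_pow] at habs
  have hρβ2 : ρ ≤ (ε₀/4)^2 * R₂^2 := by nlinarith
  have hnum := eps_num hε0 hε1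
  have h7 : (1-ε₀+ε₀/4+ε₀^2/16)^2 * R₂^2 + (ε₀/4)^2 * R₂^2 < R₂^2 := by
    nlinarith [mul_pos hR₂ hR₂]
  linarith

/-- arithmetic: slab inside big ball -/
lemma arithS {ε₀ t ρ R₁ R₂ h : ℝ} (hε0 : 0 < ε₀) (hε1 : ε₀ < 1)
    (hρ : 0 ≤ ρ) (hρβ : ρ ≤ (ε₀/4*R₂)^2) (hR₂ : 0 < R₂) (hR : R₂ ≤ R₁)
    (ht0 : 0 < t) (hth : t ≤ h) (hh : h ≤ ε₀/4*R₂) : t^2 + ρ < R₁^2 := by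
  have e2 : ε₀/4*R₂ ≤ R₂/4 := by nlinarith
  have ht : t ≤ R₂/4 := le_trans hth (le_trans hh e2)
  have ht2 : t^2 ≤ (R₂/4)^2 := pow_le_pow_left₀ ht0.le ht 2
  have hρ2 : ρ ≤ (R₂/4)^2 := le_trans hρβ (pow_le_pow_left₀ (by positivity) e2 2)
  have hsq : R₂^2 ≤ R₁^2 := by nlinarith
  have hpos : (0:ℝ) < R₂^2 := by positivity
  nlinarith

set_option maxHeartbeats 1000000 in
/-- The key measure estimate: moving the small ball outward by `h` loses at least a slab. -/
lemma core {d : ℕ} (hd : 1 ≤ d) {ε₀ : ℝ} (hε : ε₀ ∈ Ioo (0:ℝ) 1)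
    (i0 : Fin d) {R₁ R₂ r h : ℝ} (hR₂ : 0 < R₂) (hR : R₂ ≤ R₁)
    (hr : |r - R₁| ≤ (1 - ε₀) * R₂) (h0 : 0 < h) (hh : h ≤ ε₀/4 * R₂) :
    volume (ball (0 : Euc d) R₁ ∩ ball ((r+h) • EuclideanSpace.single i0 (1:ℝ)) R₂)
      + ENNReal.ofReal (h * ((ε₀ / (2 * Real.sqrt d))^(d-1) * R₂^(d-1)))
      ≤ volume (ball (0 : Euc d) R₁ ∩ ball (r • EuclideanSpace.single i0 (1:ℝ)) R₂) := by
  obtain ⟨hε0, hε1⟩ := hε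
  have hd0 : (0:ℝ) < d := by exact_mod_cast hd
  have hsd : 0 < Real.sqrt d := Real.sqrt_pos.2 hd0
  have hR₁ : 0 < R₁ := lt_of_lt_of_le hR₂ hR
  obtain ⟨hr1, hr2⟩ := abs_le.1 hr
  have hrpos : 0 < r := by nlinarith
  set β : ℝ := ε₀ * R₂ / (4 * Real.sqrt d) with hβdef
  have hβ : 0 < β := by positivity
  -- the rho-bound
  have hβ2 : (d:ℝ) * β^2 = (ε₀/4*R₂)^2 := by
    have hsq : Real.sqrt d ^ 2 = (d:ℝ) := Real.sq_sqrt (Nat.cast_nonneg d)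
    rw [hβdef]
    field_simp
    nlinarith [hsq]
  have hρβ' : ∀ x : Euc d, (∀ i, i ≠ i0 → x i ∈ Ioo (-β) β) →
      ∑ i ∈ Finset.univ.erase i0, (x i)^2 ≤ (ε₀/4*R₂)^2 := by
    intro x hx
    refine le_trans (rho_bound i0 x hx) ?_
    have hcast : ((d - 1 : ℕ) : ℝ) ≤ (d : ℝ) := by
      exact_mod_cast Nat.cast_le.2 (Nat.sub_le d 1)
    calc ((d - 1 : ℕ) : ℝ) * β^2 ≤ (d:ℝ) * β^2 :=
          mul_le_mul_of_nonneg_right hcast (sq_nonneg β)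
      _ = (ε₀/4*R₂)^2 := hβ2
  -- step 2
  have step2 : ball ((-h) • EuclideanSpace.single i0 (1:ℝ)) R₁
      ∩ ball (r • EuclideanSpace.single i0 (1:ℝ)) R₂ ⊆ ball (0 : Euc d) R₁ := by
    rintro x ⟨hxm, hxc⟩
    rw [mem_ball_coord i0 (-h) R₁ hR₁, sub_neg_eq_add] at hxm
    rw [mem_ball_coord i0 r R₂ hR₂] at hxc
    exact (mem_ball_zero_coord i0 R₁ hR₁ x).2
      (arith2 (rho_nonneg i0 x) hrpos h0 hR hR₂ hxm hxc)
  -- step 3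
  have step3 : (ball (0 : Euc d) R₁ ∩ cyl i0 (Ioi 0) β)
      \ ball ((-h) • EuclideanSpace.single i0 (1:ℝ)) R₁
      ⊆ ball (r • EuclideanSpace.single i0 (1:ℝ)) R₂ := by
    rintro x ⟨⟨hxA, hxK⟩, hxm⟩
    rw [mem_ball_zero_coord i0 R₁ hR₁] at hxA
    rw [mem_cyl] at hxK
    rw [mem_ball_coord i0 (-h) R₁ hR₁, sub_neg_eq_add] at hxm
    rw [mem_ball_coord i0 r R₂ hR₂]
    exact arith3 hε0 hε1 (rho_nonneg i0 x) (hρβ' x hxK.2) hR₂ hR hr1 hr2 h0 hh hxA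
      (not_lt.1 hxm) hxK.1
  -- slab in ball and in cylinder
  have hSA : cyl i0 (Ioc 0 h) β ⊆ ball (0 : Euc d) R₁ := by
    intro x hx
    rw [mem_cyl] at hx
    rw [mem_ball_zero_coord i0 R₁ hR₁]
    exact arithS hε0 hε1 (rho_nonneg i0 x) (hρβ' x hx.2) hR₂ hR hx.1.1 hx.1.2 hh
  have hSK : cyl i0 (Ioc 0 h) β ⊆ cyl i0 (Ioi 0) β := by
    intro x hx
    rw [mem_cyl] at hx ⊢
    exact ⟨hx.1.1, hx.2⟩
  have hKhsub : cyl i0 (Ioi h) β ∩ ball (0 : Euc d) R₁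
      ⊆ ball (0 : Euc d) R₁ ∩ cyl i0 (Ioi 0) β := by
    rintro x ⟨hxk, hxa⟩
    rw [mem_cyl] at hxk
    exact ⟨hxa, (mem_cyl _ _ _ _).2 ⟨lt_trans h0 hxk.1, hxk.2⟩⟩
  have hdisj1 : Disjoint (cyl i0 (Ioi h) β ∩ ball (0 : Euc d) R₁) (cyl i0 (Ioc 0 h) β) := by
    rw [Set.disjoint_left]
    rintro x ⟨hxk, -⟩ hxs
    rw [mem_cyl] at hxk hxs
    exact absurd hxs.1.2 (not_le.2 hxk.1)
  have hdisj2 : Disjoint (ball (0 : Euc d) R₁ ∩ ball (r • EuclideanSpace.single i0 (1:ℝ)) R₂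
      ∩ ball ((-h) • EuclideanSpace.single i0 (1:ℝ)) R₁)
      ((ball (0 : Euc d) R₁ ∩ cyl i0 (Ioi 0) β)
        \ ball ((-h) • EuclideanSpace.single i0 (1:ℝ)) R₁) := by
    rw [Set.disjoint_left]
    rintro x ⟨-, hxm⟩ hxs
    exact hxs.2 hxm
  -- translations
  have hball0 : ball (0 : Euc d) R₁ = ball ((0:ℝ) • EuclideanSpace.single i0 (1:ℝ)) R₁ := by
    rw [zero_smul]
  have hTA : (fun x : Euc d => x + h • EuclideanSpace.single i0 (1:ℝ)) ⁻¹'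
      ball (0 : Euc d) R₁ = ball ((-h) • EuclideanSpace.single i0 (1:ℝ)) R₁ := by
    rw [hball0, T_preimage_ball]
    norm_num
  have hTC' : (fun x : Euc d => x + h • EuclideanSpace.single i0 (1:ℝ)) ⁻¹'
      ball ((r+h) • EuclideanSpace.single i0 (1:ℝ)) R₂
      = ball (r • EuclideanSpace.single i0 (1:ℝ)) R₂ := by
    rw [T_preimage_ball]
    norm_num
  have hTKh : (fun x : Euc d => x + h • EuclideanSpace.single i0 (1:ℝ)) ⁻¹'
      cyl i0 (Ioi h) β = cyl i0 (Ioi 0) β := by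
    rw [T_preimage_cyl]
    have huniv : ((fun u : ℝ => u + h) ⁻¹' Ioi h) = Ioi 0 := by
      ext u
      constructor
      · intro hu
        exact (lt_add_iff_pos_left h).1 hu
      · intro hu
        exact (lt_add_iff_pos_left h).2 hu
    rw [huniv]
  -- measure identities
  have m1 : volume (ball (0 : Euc d) R₁ ∩ ball ((r+h) • EuclideanSpace.single i0 (1:ℝ)) R₂)
      = volume (ball ((-h) • EuclideanSpace.single i0 (1:ℝ)) R₁
        ∩ ball (r • EuclideanSpace.single i0 (1:ℝ)) R₂) := by
    have hpre : (fun x : Euc d => x + h • EuclideanSpace.single i0 (1:ℝ)) ⁻¹'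
        (ball (0 : Euc d) R₁ ∩ ball ((r+h) • EuclideanSpace.single i0 (1:ℝ)) R₂)
        = ball ((-h) • EuclideanSpace.single i0 (1:ℝ)) R₁
          ∩ ball (r • EuclideanSpace.single i0 (1:ℝ)) R₂ := by
      rw [preimage_inter, hTA, hTC']
    rw [← hpre]
    exact (measure_preimage_add_right volume (h • EuclideanSpace.single i0 (1:ℝ)) _).symm
  have m5b : volume (cyl i0 (Ioi 0) β ∩ ball ((-h) • EuclideanSpace.single i0 (1:ℝ)) R₁)
      = volume (cyl i0 (Ioi h) β ∩ ball (0 : Euc d) R₁) := by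
    have hpre : (fun x : Euc d => x + h • EuclideanSpace.single i0 (1:ℝ)) ⁻¹'
        (cyl i0 (Ioi h) β ∩ ball (0 : Euc d) R₁)
        = cyl i0 (Ioi 0) β ∩ ball ((-h) • EuclideanSpace.single i0 (1:ℝ)) R₁ := by
      rw [preimage_inter, hTKh, hTA]
    rw [← hpre]
    exact measure_preimage_add_right volume (h • EuclideanSpace.single i0 (1:ℝ)) _
  -- measurability and finiteness
  have hmK : MeasurableSet (cyl i0 (Ioi (0:ℝ)) β) := measurable_cyl i0 measurableSet_Ioi β
  have hmS : MeasurableSet (cyl i0 (Ioc (0:ℝ) h) β) := measurable_cyl i0 measurableSet_Ioc β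
  have hKAmfin : volume (cyl i0 (Ioi 0) β
      ∩ ball ((-h) • EuclideanSpace.single i0 (1:ℝ)) R₁) ≠ ⊤ :=
    (lt_of_le_of_lt (measure_mono inter_subset_right) measure_ball_lt_top).ne
  -- m2
  have m2 : volume (ball (0 : Euc d) R₁ ∩ ball ((r+h) • EuclideanSpace.single i0 (1:ℝ)) R₂)
      ≤ volume (ball (0 : Euc d) R₁ ∩ ball (r • EuclideanSpace.single i0 (1:ℝ)) R₂
        ∩ ball ((-h) • EuclideanSpace.single i0 (1:ℝ)) R₁) := by
    rw [m1]
    exact measure_mono (fun x hx => ⟨⟨step2 hx, hx.2⟩, hx.1⟩)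
  -- m5
  have m5 : volume (cyl i0 (Ioc 0 h) β)
      ≤ volume ((ball (0 : Euc d) R₁ ∩ cyl i0 (Ioi 0) β)
        \ ball ((-h) • EuclideanSpace.single i0 (1:ℝ)) R₁) := by
    have m5a : volume (ball (0 : Euc d) R₁ ∩ cyl i0 (Ioi 0) β)
        ≤ volume ((ball (0 : Euc d) R₁ ∩ cyl i0 (Ioi 0) β)
          \ ball ((-h) • EuclideanSpace.single i0 (1:ℝ)) R₁)
          + volume (cyl i0 (Ioi 0) β
            ∩ ball ((-h) • EuclideanSpace.single i0 (1:ℝ)) R₁) := by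
      refine le_trans (measure_mono ?_) (measure_union_le _ _)
      intro x hx
      by_cases hxm : x ∈ ball ((-h) • EuclideanSpace.single i0 (1:ℝ)) R₁
      · exact Or.inr ⟨hx.2, hxm⟩
      · exact Or.inl ⟨hx, hxm⟩
    have m5c : volume (cyl i0 (Ioi h) β ∩ ball (0 : Euc d) R₁)
        + volume (cyl i0 (Ioc 0 h) β)
        ≤ volume (ball (0 : Euc d) R₁ ∩ cyl i0 (Ioi 0) β) := by
      rw [← measure_union hdisj1 hmS]
      exact measure_mono (Set.union_subset hKhsub (Set.subset_inter hSA hSK))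
    rw [← m5b] at m5c
    have hch : volume (cyl i0 (Ioc 0 h) β)
        + volume (cyl i0 (Ioi 0) β ∩ ball ((-h) • EuclideanSpace.single i0 (1:ℝ)) R₁)
        ≤ volume ((ball (0 : Euc d) R₁ ∩ cyl i0 (Ioi 0) β)
          \ ball ((-h) • EuclideanSpace.single i0 (1:ℝ)) R₁)
          + volume (cyl i0 (Ioi 0) β
            ∩ ball ((-h) • EuclideanSpace.single i0 (1:ℝ)) R₁) := by
      rw [add_comm]
      exact le_trans m5c m5a
    exact (ENNReal.add_le_add_iff_right hKAmfin).1 hch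
  -- volume of the slab
  have hvolS : volume (cyl i0 (Ioc 0 h) β)
      = ENNReal.ofReal (h * ((ε₀ / (2 * Real.sqrt d))^(d-1) * R₂^(d-1))) := by
    rw [volume_cyl i0 measurableSet_Ioc β, Real.volume_Ioc, sub_zero,
      ← ENNReal.ofReal_pow (by positivity), ← ENNReal.ofReal_mul h0.le]
    congr 1
    have h2β : 2 * β = ε₀ / (2 * Real.sqrt d) * R₂ := by
      rw [hβdef]; field_simp; ring
    rw [h2β, mul_pow]
  -- combine
  calc volume (ball (0 : Euc d) R₁ ∩ ball ((r+h) • EuclideanSpace.single i0 (1:ℝ)) R₂)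
      + ENNReal.ofReal (h * ((ε₀ / (2 * Real.sqrt d))^(d-1) * R₂^(d-1)))
      = volume (ball (0 : Euc d) R₁ ∩ ball ((r+h) • EuclideanSpace.single i0 (1:ℝ)) R₂)
        + volume (cyl i0 (Ioc 0 h) β) := by rw [hvolS]
    _ ≤ volume (ball (0 : Euc d) R₁ ∩ ball (r • EuclideanSpace.single i0 (1:ℝ)) R₂
          ∩ ball ((-h) • EuclideanSpace.single i0 (1:ℝ)) R₁)
        + volume ((ball (0 : Euc d) R₁ ∩ cyl i0 (Ioi 0) β)
          \ ball ((-h) • EuclideanSpace.single i0 (1:ℝ)) R₁) := add_le_add m2 m5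
    _ = volume ((ball (0 : Euc d) R₁ ∩ ball (r • EuclideanSpace.single i0 (1:ℝ)) R₂
          ∩ ball ((-h) • EuclideanSpace.single i0 (1:ℝ)) R₁)
        ∪ ((ball (0 : Euc d) R₁ ∩ cyl i0 (Ioi 0) β)
          \ ball ((-h) • EuclideanSpace.single i0 (1:ℝ)) R₁)) :=
        (measure_union hdisj2 ((measurableSet_ball.inter hmK).diff measurableSet_ball)).symm
    _ ≤ volume (ball (0 : Euc d) R₁ ∩ ball (r • EuclideanSpace.single i0 (1:ℝ)) R₂) := by
        apply measure_mono
        rintro x (hx | hx)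
        · exact hx.1
        · exact ⟨hx.1.1, step3 hx⟩

set_option maxHeartbeats 1000000 in
lemma psi_rotate {d : ℕ} (hd : 1 ≤ d) (R₁ R₂ : ℝ) (e : Euc d) (he : ‖e‖ = 1) :
    Psi d R₁ R₂ e = Psi d R₁ R₂ (EuclideanSpace.single (⟨0, hd⟩ : Fin d) (1:ℝ)) := by
  obtain ⟨b, hb⟩ : ∃ b : OrthonormalBasis (Fin d) ℝ (Euc d),
      ∀ i ∈ ({(⟨0, hd⟩ : Fin d)} : Set (Fin d)), b i = (fun _ : Fin d => e) i := by
    apply Orthonormal.exists_orthonormalBasis_extension_of_card_eq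
    · simp
    · constructor
      · intro i
        simpa using he
      · intro i j hij
        exact absurd (Subtype.ext ((Set.mem_singleton_iff.1 i.2).trans
          (Set.mem_singleton_iff.1 j.2).symm)) hij
  have hbe : b ⟨0, hd⟩ = e := hb _ rfl
  funext t
  unfold Psi
  congr 1
  have hpre : b.repr ⁻¹' (ball (0 : Euc d) R₁ ∩
      ball (t • EuclideanSpace.single (⟨0, hd⟩ : Fin d) (1:ℝ)) R₂)
      = ball (0 : Euc d) R₁ ∩ ball (t • e) R₂ := by
    rw [preimage_inter, LinearIsometryEquiv.preimage_ball, LinearIsometryEquiv.preimage_ball,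
      map_zero, LinearIsometryEquiv.map_smul]
    rw [← hbe, ← OrthonormalBasis.repr_self b ⟨0, hd⟩, b.repr.symm_apply_apply]
  rw [← hpre]
  exact b.measurePreserving_repr.measure_preimage
    ((measurableSet_ball.inter measurableSet_ball).nullMeasurableSet)

set_option maxHeartbeats 1000000 in
theorem stmt7 (d : ℕ) (hd : 1 ≤ d) (ε₀ : ℝ) (hε : ε₀ ∈ Ioo (0 : ℝ) 1) :
    ∃ c : ℝ, 0 < c ∧
      ∀ R₁ R₂ : ℝ, 0 < R₂ → R₂ ≤ R₁ →
        ∀ e : Euc d, ‖e‖ = 1 →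
          ∀ r : ℝ, |r - R₁| ≤ (1 - ε₀) * R₂ →
            ∀ D : ℝ, HasDerivAt (Psi d R₁ R₂ e) D r →
              c * R₂ ^ ((d : ℝ) - 1) ≤ -D := by
  have hd0 : (0:ℝ) < d := by exact_mod_cast hd
  have hsd : 0 < Real.sqrt d := Real.sqrt_pos.2 hd0
  have hε0 : 0 < ε₀ := hε.1
  refine ⟨(ε₀ / (2 * Real.sqrt d))^(d-1),
    pow_pos (div_pos hε0 (by positivity)) _, ?_⟩
  intro R₁ R₂ hR₂ hR e he r hr D hD
  rw [psi_rotate hd R₁ R₂ e he] at hD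
  have hx0 : r < r + ε₀/4 * R₂ := by nlinarith [hε.1]
  have hkey : ∀ x : ℝ, x ∈ Ioo r (r + ε₀/4 * R₂) →
      slope (Psi d R₁ R₂ (EuclideanSpace.single (⟨0, hd⟩ : Fin d) (1:ℝ))) r x
        ≤ -((ε₀ / (2 * Real.sqrt d))^(d-1) * R₂^(d-1)) := by
    intro x hx
    have h0 : 0 < x - r := sub_pos.2 hx.1
    have hhle : x - r ≤ ε₀/4 * R₂ := by linarith [hx.2.le]
    have hcore := core hd hε (⟨0, hd⟩ : Fin d) hR₂ hR hr h0 hhle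
    rw [show r + (x - r) = x by ring] at hcore
    have hfin : volume (ball (0 : Euc d) R₁
        ∩ ball (r • EuclideanSpace.single (⟨0, hd⟩ : Fin d) (1:ℝ)) R₂) ≠ ⊤ :=
      (lt_of_le_of_lt (measure_mono inter_subset_left) measure_ball_lt_top).ne
    have hfin2 : volume (ball (0 : Euc d) R₁
        ∩ ball (x • EuclideanSpace.single (⟨0, hd⟩ : Fin d) (1:ℝ)) R₂) ≠ ⊤ :=
      (lt_of_le_of_lt (measure_mono inter_subset_left) measure_ball_lt_top).ne
    have hmono := ENNReal.toReal_mono hfin hcore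
    rw [ENNReal.toReal_add hfin2 ENNReal.ofReal_ne_top,
      ENNReal.toReal_ofReal (mul_nonneg h0.le (mul_nonneg
        (pow_nonneg (div_nonneg hε0.le (by positivity)) _)
        (pow_nonneg hR₂.le _)))] at hmono
    rw [slope_def_field, div_le_iff₀ h0]
    simp only [Psi]
    linarith [hmono]
  have hTs : Tendsto (slope (Psi d R₁ R₂ (EuclideanSpace.single (⟨0, hd⟩ : Fin d) (1:ℝ))) r)
      (𝓝[≠] r) (𝓝 D) := hasDerivAt_iff_tendsto_slope.1 hD
  have hTs' : Tendsto (slope (Psi d R₁ R₂ (EuclideanSpace.single (⟨0, hd⟩ : Fin d) (1:ℝ))) r)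
      (𝓝[>] r) (𝓝 D) :=
    hTs.mono_left (nhdsWithin_mono r (fun x hx => ne_of_gt hx))
  have hub : D ≤ -((ε₀ / (2 * Real.sqrt d))^(d-1) * R₂^(d-1)) :=
    le_of_tendsto hTs' (Filter.eventually_of_mem
      (Ioo_mem_nhdsGT_of_mem ⟨le_refl r, hx0⟩) hkey)
  have hcast : R₂ ^ ((d : ℝ) - 1) = R₂ ^ (d - 1 : ℕ) := by
    rw [← Real.rpow_natCast R₂ (d-1)]
    congr 1
    rw [Nat.cast_sub hd, Nat.cast_one]
  rw [hcast]
  linarith [hub]
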